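/- With e_n x^{(β)} = [β_n+1](Σ_{k=1}^{n} θ(ε_k,β)[β_k]) x^{(β+ε_n)} and f_i x^{(β)} = [β_{i+1}+1] x^{(β−ε_i+ε_{i+1})} for 1 ≤ i ≤ n−1, the operators commute: e_n f_i = f_i e_n for all 1 ≤ i ≤ n−1. -/

import Mathlib

open Finset

/-- The quantum integer `[m] := (q^m - q^{-m})/(q - q^{-1})` for `m : ℤ`. -/
def qint {K : Type*} [Field K] (q : K) (m : ℤ) : K :=
  (q ^ m - q ^ (-m)) / (q - q⁻¹)

/-- `θ(ε_k, β) = q^{Σ_{s>k} β_s - Σ_{s<k} β_s}`. -/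
def thq {K : Type*} [Field K] (q : K) (n : ℕ) (β : ℕ → ℤ) (k : ℕ) : K :=
  q ^ ((∑ s ∈ Finset.Icc (k + 1) n, β s) - ∑ s ∈ Finset.Ico 1 k, β s)

/-- The `i`-th standard basis vector `ε_i`. -/
def eps (i : ℕ) : ℕ → ℤ := fun k => if k = i then 1 else 0

lemma qint_zpow_mul {K : Type*} [Field K] (q : K) (hq0 : q ≠ 0) (x m : ℤ) :
    q ^ x * qint q m = (q ^ (x + m) - q ^ (x - m)) / (q - q⁻¹) := by
  unfold qint
  rw [← mul_div_assoc, mul_sub, ← zpow_add₀ hq0, ← zpow_add₀ hq0, ← sub_eq_add_neg]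

lemma key_qint {K : Type*} [Field K] (q : K) (hq0 : q ≠ 0) (e a b : ℤ) :
    q ^ (e + a + b + 1) * qint q (a - 1) + q ^ (e + 1) * qint q (b + 1)
      = q ^ (e + a + b) * qint q a + q ^ e * qint q b := by
  rw [qint_zpow_mul q hq0, qint_zpow_mul q hq0, qint_zpow_mul q hq0, qint_zpow_mul q hq0,
    ← add_div, ← add_div]
  congr 1
  rw [show e + a + b + 1 + (a - 1) = e + a + b + a from by ring,
    show e + a + b + 1 - (a - 1) = e + 1 + (b + 1) from by ring,
    show e + a + b - a = e + b from by ring,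
    show e + 1 - (b + 1) = e - b from by ring]
  ring

lemma sum_invariant {K : Type*} [Field K] (q : K) (hq0 : q ≠ 0) (n i : ℕ)
    (hi : 1 ≤ i) (hin : i + 1 ≤ n) (β : ℕ → ℤ) :
    ∑ k ∈ Finset.Icc 1 n, thq q n (β - eps i + eps (i + 1)) k *
        qint q ((β - eps i + eps (i + 1)) k)
      = ∑ k ∈ Finset.Icc 1 n, thq q n β k * qint q (β k) := by
  set β' : ℕ → ℤ := β - eps i + eps (i + 1) with hβ'def
  have hβ'app : ∀ s, β' s = β s - (if s = i then 1 else 0) + (if s = i + 1 then 1 else 0) := by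
    intro s; simp [hβ'def, eps]
  have hsum : ∀ F : Finset ℕ, ∑ s ∈ F, β' s
      = (∑ s ∈ F, β s) - (if i ∈ F then 1 else 0) + (if i + 1 ∈ F then 1 else 0) := by
    intro F
    simp only [hβ'app]
    rw [Finset.sum_add_distrib, Finset.sum_sub_distrib,
      Finset.sum_ite_eq' F i (fun _ => (1 : ℤ)), Finset.sum_ite_eq' F (i + 1) (fun _ => (1 : ℤ))]
  have hi1mem : i + 1 ∈ Finset.Icc 1 n := by simp only [Finset.mem_Icc]; omega
  have himem : i ∈ (Finset.Icc 1 n).erase (i + 1) := by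
    simp only [Finset.mem_erase, Finset.mem_Icc]; omega
  have hi1mem' : i + 1 ∈ Finset.Icc (i + 1) n := by simp only [Finset.mem_Icc]; omega
  have hA : ∑ s ∈ Finset.Icc (i + 1) n, β s
      = β (i + 1) + ∑ s ∈ Finset.Icc (i + 1 + 1) n, β s := by
    have h := Finset.add_sum_erase (Finset.Icc (i + 1) n) β hi1mem'
    rw [Finset.Icc_erase_left, ← Finset.Icc_add_one_left_eq_Ioc] at h
    exact h.symm
  have hB : ∑ s ∈ Finset.Ico 1 (i + 1), β s = (∑ s ∈ Finset.Ico 1 i, β s) + β i :=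
    Finset.sum_Ico_succ_top hi β
  rw [← Finset.sum_erase_add (Finset.Icc 1 n) (fun k => thq q n β' k * qint q (β' k)) hi1mem,
    ← Finset.sum_erase_add _ (fun k => thq q n β' k * qint q (β' k)) himem,
    ← Finset.sum_erase_add (Finset.Icc 1 n) (fun k => thq q n β k * qint q (β k)) hi1mem,
    ← Finset.sum_erase_add _ (fun k => thq q n β k * qint q (β k)) himem]
  have hrest : ∑ k ∈ ((Finset.Icc 1 n).erase (i + 1)).erase i, thq q n β' k * qint q (β' k)
      = ∑ k ∈ ((Finset.Icc 1 n).erase (i + 1)).erase i, thq q n β k * qint q (β k) := by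
    apply Finset.sum_congr rfl
    intro k hk
    simp only [Finset.mem_erase, Finset.mem_Icc] at hk
    obtain ⟨hki, hki1, hk1, hkn⟩ := hk
    have hv : β' k = β k := by
      rw [hβ'app, if_neg hki, if_neg hki1]; ring
    have ht : thq q n β' k = thq q n β k := by
      unfold thq
      congr 1
      rw [hsum, hsum]
      simp only [Finset.mem_Icc, Finset.mem_Ico]
      split_ifs <;> omega
    rw [hv, ht]
  rw [hrest, add_assoc, add_assoc]
  congr 1
  -- now the two exceptional terms
  have hbi : β' i = β i - 1 := by
    rw [hβ'app, if_pos rfl, if_neg (by omega)]; ring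
  have hbi1 : β' (i + 1) = β (i + 1) + 1 := by
    rw [hβ'app, if_neg (by omega), if_pos rfl]; ring
  have ht1 : thq q n β i
      = q ^ ((∑ s ∈ Finset.Icc (i + 1 + 1) n, β s) - (∑ s ∈ Finset.Ico 1 (i + 1), β s)
          + β i + β (i + 1)) := by
    unfold thq
    congr 1
    rw [hA, hB]
    ring
  have ht2 : thq q n β (i + 1)
      = q ^ ((∑ s ∈ Finset.Icc (i + 1 + 1) n, β s) - (∑ s ∈ Finset.Ico 1 (i + 1), β s)) := rfl
  have ht3 : thq q n β' i
      = q ^ ((∑ s ∈ Finset.Icc (i + 1 + 1) n, β s) - (∑ s ∈ Finset.Ico 1 (i + 1), β s)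
          + β i + β (i + 1) + 1) := by
    unfold thq
    congr 1
    rw [hsum, hsum, hA, hB]
    simp only [Finset.mem_Icc, Finset.mem_Ico]
    split_ifs <;> omega
  have ht4 : thq q n β' (i + 1)
      = q ^ ((∑ s ∈ Finset.Icc (i + 1 + 1) n, β s) - (∑ s ∈ Finset.Ico 1 (i + 1), β s) + 1) := by
    unfold thq
    congr 1
    rw [hsum, hsum, hB]
    simp only [Finset.mem_Icc, Finset.mem_Ico]
    split_ifs <;> omega
  simp only [hbi, hbi1, ht1, ht2, ht3, ht4]
  exact key_qint q hq0 _ _ _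

theorem en_fi_commute {K V : Type*} [Field K] [AddCommGroup V] [Module K V]
    (q : K) (hq0 : q ≠ 0) (hq1 : q ≠ 1) (hqm : q ≠ -1) (n : ℕ)
    (X : (ℕ → ℤ) → V)
    (hX0 : ∀ β : ℕ → ℤ, (∃ k ∈ Finset.Icc 1 n, β k < 0) → X β = 0)
    (en : Module.End K V) (f : ℕ → Module.End K V)
    (hen : ∀ β : ℕ → ℤ, (∀ k ∈ Finset.Icc 1 n, 0 ≤ β k) →
      en (X β) = (qint q (β n + 1) * ∑ k ∈ Finset.Icc 1 n, thq q n β k * qint q (β k)) •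
        X (β + eps n))
    (hf : ∀ i, 1 ≤ i → i + 1 ≤ n → ∀ β : ℕ → ℤ, (∀ k ∈ Finset.Icc 1 n, 0 ≤ β k) →
      f i (X β) = qint q (β (i + 1) + 1) • X (β - eps i + eps (i + 1))) :
    ∀ i, 1 ≤ i → i + 1 ≤ n → ∀ β : ℕ → ℤ, (∀ k ∈ Finset.Icc 1 n, 0 ≤ β k) →
      (en * f i) (X β) = (f i * en) (X β) := by
  intro i hi hin β hβ
  have hine : i ≠ n := by omega
  have hβn : ∀ k ∈ Finset.Icc 1 n, 0 ≤ (β + eps n) k := by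
    intro k hk
    have := hβ k hk
    simp only [Pi.add_apply, eps]
    split_ifs <;> omega
  simp only [Module.End.mul_apply]
  rw [hf i hi hin β hβ, hen β hβ, map_smul, map_smul, hf i hi hin (β + eps n) hβn]
  by_cases h0 : β i = 0
  · have h1 : X (β - eps i + eps (i + 1)) = 0 := by
      apply hX0
      refine ⟨i, by simp only [Finset.mem_Icc]; omega, ?_⟩
      simp only [Pi.add_apply, Pi.sub_apply, eps]
      split_ifs <;> omega
    have h2 : X (β + eps n - eps i + eps (i + 1)) = 0 := by
      apply hX0
      refine ⟨i, by simp only [Finset.mem_Icc]; omega, ?_⟩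
      simp only [Pi.add_apply, Pi.sub_apply, eps]
      split_ifs <;> omega
    rw [h1, h2]
    simp
  · have hβ'pos : ∀ k ∈ Finset.Icc 1 n, 0 ≤ (β - eps i + eps (i + 1)) k := by
      intro k hk
      have hk0 := hβ k hk
      simp only [Pi.add_apply, Pi.sub_apply, eps]
      by_cases hki : k = i
      · subst hki; split_ifs <;> omega
      · by_cases hki1 : k = i + 1
        · subst hki1; split_ifs <;> omega
        · split_ifs <;> omega
    rw [hen _ hβ'pos, smul_smul, smul_smul,
      show β - eps i + eps (i + 1) + eps n = β + eps n - eps i + eps (i + 1) from by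
        funext s; simp only [Pi.add_apply, Pi.sub_apply]; ring]
    congr 1
    have hS := sum_invariant q hq0 n i hi hin β
    rcases eq_or_ne (i + 1) n with h | h
    · subst h
      have hv1 : (β - eps i + eps (i + 1)) (i + 1) = β (i + 1) + 1 := by
        simp only [Pi.add_apply, Pi.sub_apply, eps]
        split_ifs <;> omega
      have hv2 : (β + eps (i + 1)) (i + 1) = β (i + 1) + 1 := by
        simp only [Pi.add_apply, eps]
        split_ifs <;> omega
      rw [hS, hv1, hv2]
      ring
    · have hv1 : (β - eps i + eps (i + 1)) n = β n := by
        simp only [Pi.add_apply, Pi.sub_apply, eps]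
        split_ifs <;> omega
      have hv2 : (β + eps n) (i + 1) = β (i + 1) := by
        simp only [Pi.add_apply, eps]
        split_ifs <;> omega
      rw [hS, hv1, hv2]
      ring
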